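/- For every even n ≥ 4, the cycle C_n admits a vertex coloring with n/2 colors, in which every color appears exactly twice (namely, coloring C_n = v_1 v_2 ⋯ v_n by giving v_i color i for 1 ≤ i ≤ n/2 and color i − n/2 for n/2 + 1 ≤ i ≤ n), that makes C_n revised rainbow vertex-connected; hence rvc*(C_n) ≤ n/2 for even n. -/

import Mathlib

/-- The list of internal vertices of a walk (its support minus the two ends). -/
def SimpleGraph.Walk.internalVertices {V : Type*} {G : SimpleGraph V} {u v : V}
    (p : G.Walk u v) : List V :=
  p.support.tail.dropLast

/-- A walk is a *rainbow path* w.r.t. a vertex coloring `c` if it is a path and its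
internal vertices receive pairwise distinct colors. -/
def SimpleGraph.Walk.IsRainbowPath {V α : Type*} {G : SimpleGraph V} {u v : V}
    (c : V → α) (p : G.Walk u v) : Prop :=
  p.IsPath ∧ (p.internalVertices.map c).Nodup

/-- A vertex-colored graph is *rainbow vertex-connected* if every pair of distinct
vertices is joined by at least one rainbow path. -/
def SimpleGraph.RainbowVertexConnected {V α : Type*} (G : SimpleGraph V) (c : V → α) : Prop :=
  ∀ u v : V, u ≠ v → ∃ p : G.Walk u v, p.IsRainbowPath c

/-- `G` can be made rainbow vertex-connected using at most `k` colors: there is a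
vertex coloring such that every pair of distinct vertices is joined by a rainbow path
all of whose internal vertices have colors among `0, …, k-1`. -/
def SimpleGraph.RVCWith {V : Type*} (G : SimpleGraph V) (k : ℕ) : Prop :=
  ∃ c : V → ℕ, ∀ u v : V, u ≠ v → ∃ p : G.Walk u v,
    p.IsRainbowPath c ∧ ∀ w ∈ p.internalVertices, c w < k

/-- The *rainbow vertex-connection number* `rvc G`: the minimum number of colors
needed to make `G` rainbow vertex-connected. -/
noncomputable def SimpleGraph.rvc {V : Type*} (G : SimpleGraph V) : ℕ :=
  sInf {k | G.RVCWith k}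

/-- A walk is a *revised rainbow path* w.r.t. a vertex coloring `c` if it is a path and
all of its vertices have distinct colors except that the two end vertices may share a
color. -/
def SimpleGraph.Walk.IsRevisedRainbowPath {V α : Type*} {G : SimpleGraph V} {u v : V}
    (c : V → α) (p : G.Walk u v) : Prop :=
  p.IsPath ∧ (p.support.dropLast.map c).Nodup ∧ (p.support.tail.map c).Nodup

/-- A vertex-colored graph is *revised rainbow vertex-connected* if every pair of
distinct vertices is joined by at least one revised rainbow path. -/
def SimpleGraph.RevisedRainbowVertexConnected {V α : Type*} (G : SimpleGraph V)
    (c : V → α) : Prop :=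
  ∀ u v : V, u ≠ v → ∃ p : G.Walk u v, p.IsRevisedRainbowPath c

/-- The *revised rainbow vertex-connection number* `rvc* G`. -/
noncomputable def SimpleGraph.rvcStar {V : Type*} (G : SimpleGraph V) : ℕ :=
  sInf {k | ∃ c : V → Fin k, G.RevisedRainbowVertexConnected c}

/-- A *cut vertex*: a vertex whose removal disconnects the graph. -/
def SimpleGraph.IsCutVertex {V : Type*} (G : SimpleGraph V) (v : V) : Prop :=
  ¬ (G.induce {u | u ≠ v}).Preconnected

/-- A *block* of `G`: a maximal (induced) connected subgraph without a cut vertex,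
described by its vertex set. -/
def SimpleGraph.IsBlock {V : Type*} (G : SimpleGraph V) (B : Set V) : Prop :=
  (G.induce B).Connected ∧ (∀ v, ¬ (G.induce B).IsCutVertex v) ∧
    ∀ C : Set V, B ⊆ C → (G.induce C).Connected →
      (∀ v, ¬ (G.induce C).IsCutVertex v) → C = B


section Aux
open SimpleGraph
open scoped Fin.NatCast Fin.CommRing

variable {n : ℕ} [NeZero n]

lemma adj_succ (hn : 2 ≤ n) (u : Fin n) : (cycleGraph n).Adj u (u + 1) := by
  rw [SimpleGraph.cycleGraph_adj']
  right
  simp [Nat.mod_eq_of_lt hn]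

def arcWalk (hn : 2 ≤ n) (u : Fin n) :
    (d : ℕ) → (SimpleGraph.cycleGraph n).Walk u (u + (d : Fin n))
  | 0 => SimpleGraph.Walk.nil.copy rfl (by simp)
  | d+1 => SimpleGraph.Walk.cons (adj_succ hn u)
      ((arcWalk hn (u+1) d).copy rfl (by push_cast; ring))

lemma support_arcWalk (hn : 2 ≤ n) (u : Fin n) (d : ℕ) :
    (arcWalk hn u d).support = (List.range (d+1)).map (fun i : ℕ => u + (i : Fin n)) := by
  induction d generalizing u with
  | zero =>
      simp [arcWalk, List.range_succ]
  | succ d ih =>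
      rw [arcWalk]
      simp only [SimpleGraph.Walk.support_copy, SimpleGraph.Walk.support_cons, ih]
      conv_rhs => rw [List.range_succ_eq_map]
      simp only [List.map_cons, List.map_map, Nat.cast_zero, add_zero]
      congr 1
      refine List.map_congr_left fun i hi => ?_
      simp only [Function.comp_apply]
      push_cast
      ring

lemma rrp_reverse {V α : Type*} {G : SimpleGraph V} {u v : V} {c : V → α} {p : G.Walk u v}
    (h : p.IsRevisedRainbowPath c) : p.reverse.IsRevisedRainbowPath c := by
  obtain ⟨hp, h1, h2⟩ := h
  refine ⟨hp.reverse, ?_, ?_⟩ <;> rw [SimpleGraph.Walk.support_reverse]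
  · rw [List.dropLast_reverse, List.map_reverse, List.nodup_reverse]
    exact h2
  · rw [List.tail_reverse, List.map_reverse, List.nodup_reverse]
    exact h1

lemma arc_rrp {m : ℕ} {α : Type*} (hm : n = 2*m) (hm2 : 2 ≤ m) (c : Fin n → α)
    (hc : ∀ w w' : Fin n, c w = c w' → w.val % m = w'.val % m)
    (u v : Fin n) (hd0 : (v - u).val ≠ 0) (hd : (v - u).val ≤ m) :
    ∃ p : (cycleGraph n).Walk u v, p.IsRevisedRainbowPath c := by
  have hn : 2 ≤ n := by omega
  set d := (v - u).val with hdd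
  have hdn : d < n := (v - u).isLt
  have hend : u + ((d : ℕ) : Fin n) = v := by
    rw [hdd, Fin.cast_val_eq_self]
    ring
  refine ⟨(arcWalk hn u d).copy rfl hend, ?_⟩
  have hsup : ((arcWalk hn u d).copy rfl hend).support
      = (List.range (d+1)).map (fun i : ℕ => u + (i : Fin n)) := by
    rw [SimpleGraph.Walk.support_copy, support_arcWalk]
  have hval : ∀ i : ℕ, i ≤ m → (u + (i : Fin n)).val % m = (u.val + i) % m := by
    intro i hi
    rw [Fin.val_add, Fin.val_natCast, Nat.mod_eq_of_lt (by omega : i < n),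
      Nat.mod_mod_of_dvd _ ⟨2, by omega⟩]
  -- nodup of colors over any window of length ≤ m starting at u + a
  have key : ∀ (L a : ℕ), a ≤ 1 → L ≤ m →
      (((List.range L).map (fun i : ℕ => u + ((a + i : ℕ) : Fin n))).map c).Nodup := by
    intro L a ha hL
    rw [List.map_map]
    refine List.Nodup.map_on ?_ (List.nodup_range (n := L))
    intro i hi j hj hij
    simp only [List.mem_range] at hi hj
    have h1 := hc _ _ hij
    rw [hval (a+i) (by omega), hval (a+j) (by omega)] at h1
    rw [show u.val + (a+i) = (u.val + a) + i by ring,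
      show u.val + (a+j) = (u.val + a) + j by ring] at h1
    have h2 : i % m = j % m := Nat.ModEq.add_left_cancel' (u.val + a) h1
    rw [Nat.mod_eq_of_lt (by omega), Nat.mod_eq_of_lt (by omega)] at h2
    omega
  -- support nodup (path)
  refine ⟨?_, ?_, ?_⟩
  · rw [SimpleGraph.Walk.isPath_def, hsup]
    refine List.Nodup.map_on ?_ List.nodup_range
    intro i hi j hj hij
    simp only [List.mem_range] at hi hj
    have : (u + (i : Fin n)).val = (u + (j : Fin n)).val := by rw [hij]
    rw [Fin.val_add, Fin.val_natCast, Fin.val_add, Fin.val_natCast,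
      Nat.mod_eq_of_lt (by omega : i < n), Nat.mod_eq_of_lt (by omega : j < n)] at this
    have hi' : (u.val + i) % n = u.val + i - (if u.val + i < n then 0 else n) := by
      split <;> rename_i h
      · simp [Nat.mod_eq_of_lt h]
      · rw [Nat.mod_eq_sub_mod (by omega), Nat.mod_eq_of_lt (by omega)]
    have hj' : (u.val + j) % n = u.val + j - (if u.val + j < n then 0 else n) := by
      split <;> rename_i h
      · simp [Nat.mod_eq_of_lt h]
      · rw [Nat.mod_eq_sub_mod (by omega), Nat.mod_eq_of_lt (by omega)]
    split at hi' <;> split at hj' <;> omega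
  · -- dropLast : colors of u + i, i ∈ range d
    rw [hsup, ← List.map_dropLast]
    have : (List.range (d+1)).dropLast = List.range d := by
      rw [List.range_succ, List.dropLast_concat]
    rw [this]
    have := key d 0 (by omega) (by omega)
    simpa using this
  · -- tail : colors of u + (1+i), i ∈ range d
    rw [hsup]
    rw [List.range_succ_eq_map]
    simp only [List.map_cons, List.tail_cons, List.map_map]
    have := key d 1 (by omega) (by omega)
    rw [List.map_map] at this
    have heq : (c ∘ (fun i : ℕ => u + (i : Fin n)) ∘ Nat.succ)
        = (c ∘ fun i : ℕ => u + ((1 + i : ℕ) : Fin n)) := by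
      funext i
      simp only [Function.comp_apply]
      rw [Nat.succ_eq_one_add]
    rw [heq]
    exact this

end Aux

/-- for even `n ≥ 4`, coloring the `i`-th vertex (`0`-indexed) of `Cₙ`
by `i mod (n/2)` uses `n/2` colors, each exactly twice, and makes `Cₙ` revised rainbow
vertex-connected; hence `rvc* (Cₙ) ≤ n/2`. -/
theorem rvcStar_cycleGraph_le_of_even (n : ℕ) (hn : 4 ≤ n) (heven : Even n) :
    (∀ x : Fin (n / 2),
      (Finset.univ.filter (fun v : Fin n =>
        (⟨v.val % (n / 2), Nat.mod_lt _ (by omega)⟩ : Fin (n / 2)) = x)).card = 2) ∧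
    (SimpleGraph.cycleGraph n).RevisedRainbowVertexConnected
      (fun v : Fin n => (⟨v.val % (n / 2), Nat.mod_lt _ (by omega)⟩ : Fin (n / 2))) ∧
    (SimpleGraph.cycleGraph n).rvcStar ≤ n / 2 := by
  obtain ⟨m, hm⟩ := heven
  have hm' : n = 2 * m := by omega
  have hm2 : 2 ≤ m := by omega
  have hmn : n / 2 = m := by omega
  haveI : NeZero n := ⟨by omega⟩
  -- the connectivity statement
  have hconn : (SimpleGraph.cycleGraph n).RevisedRainbowVertexConnected
      (fun v : Fin n => (⟨v.val % (n / 2), Nat.mod_lt _ (by omega)⟩ : Fin (n / 2))) := by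
    intro u v huv
    have hc : ∀ w w' : Fin n,
        (⟨w.val % (n / 2), Nat.mod_lt _ (by omega)⟩ : Fin (n / 2)) =
          (⟨w'.val % (n / 2), Nat.mod_lt _ (by omega)⟩ : Fin (n / 2)) →
        w.val % m = w'.val % m := by
      intro w w' h
      have := Fin.mk.injEq _ _ _ _ ▸ h
      rw [Fin.mk.injEq] at h
      rw [← hmn]
      exact h
    have hvu : v - u ≠ 0 := sub_ne_zero.mpr (Ne.symm huv)
    have huv' : u - v ≠ 0 := sub_ne_zero.mpr huv
    have hd0 : (v - u).val ≠ 0 := fun h => hvu (Fin.ext h)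
    have hd0' : (u - v).val ≠ 0 := fun h => huv' (Fin.ext h)
    have hsum : (v - u).val + (u - v).val = n := by
      have h0 : (v - u) + (u - v) = 0 := by open Fin.CommRing in ring
      have h1 : ((v - u).val + (u - v).val) % n = 0 := by
        rw [← Fin.val_add, h0, Fin.val_zero]
      obtain ⟨k, hk⟩ := Nat.dvd_of_mod_eq_zero h1
      have hlt : (v - u).val < n := (v - u).isLt
      have hlt' : (u - v).val < n := (u - v).isLt
      rcases k with _ | _ | k
      · omega
      · omega
      · have h2 : n * 2 ≤ n * (k + 1 + 1) := Nat.mul_le_mul_left n (by omega)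
        omega
    by_cases hle : (v - u).val ≤ m
    · exact arc_rrp hm' hm2 _ hc u v hd0 hle
    · obtain ⟨p, hp⟩ := arc_rrp hm' hm2
        (fun v : Fin n => (⟨v.val % (n / 2), Nat.mod_lt _ (by omega)⟩ : Fin (n / 2)))
        hc v u hd0' (by omega)
      exact ⟨p.reverse, rrp_reverse hp⟩
  refine ⟨?_, hconn, ?_⟩
  · -- counting
    intro x
    have hx : x.val < m := hmn ▸ x.isLt
    have h1 : x.val < n := by omega
    have h2 : x.val + m < n := by omega
    have hfil : (Finset.univ.filter (fun v : Fin n =>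
        (⟨v.val % (n / 2), Nat.mod_lt _ (by omega)⟩ : Fin (n / 2)) = x)) =
        ({⟨x.val, h1⟩, ⟨x.val + m, h2⟩} : Finset (Fin n)) := by
      ext v
      simp only [Finset.mem_filter, Finset.mem_univ, true_and, Finset.mem_insert,
        Finset.mem_singleton, Fin.ext_iff, hmn]
      have hv : v.val < 2 * m := by omega
      constructor
      · intro h
        by_cases hvm : v.val < m
        · left; rwa [Nat.mod_eq_of_lt hvm] at h
        · right
          rw [Nat.mod_eq_sub_mod (by omega), Nat.mod_eq_of_lt (by omega)] at h
          omega
      · rintro (h | h)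
        · rw [h, Nat.mod_eq_of_lt hx]
        · rw [h, Nat.mod_eq_sub_mod (by omega), Nat.add_sub_cancel, Nat.mod_eq_of_lt hx]
    rw [hfil]
    rw [Finset.card_pair (by simp [Fin.ext_iff]; omega)]
  · -- rvcStar bound
    apply Nat.sInf_le
    exact ⟨_, hconn⟩
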